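/- Let Q=(O,T,q) be an OMQ with O formulated in first-order logic with equality, q a UCQ, and q_r an infinitary UCQ rewriting of Q. Then the OMQ (O,T,q_r), obtained by replacing the query by its own rewriting, is contained in q_r: for every T-ABox A, every certain answer to (O,T,q_r) on A is already a plain answer to q_r on A. -/

import Mathlib

/-- A relational schema: a collection of relation names with arities. -/
structure Schema : Type 1 where
  Rel : Type
  arity : Rel → ℕ

/-- A fact over schema `S` with constants from `C`. -/
def Fct (S : Schema) (C : Type) : Type := (R : S.Rel) × (Fin (S.arity R) → C)

/-- Apply a function on constants to a fact. -/
def mapFct {S : Schema} {C D : Type} (h : C → D) (f : Fct S C) : Fct S D :=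
  ⟨f.1, h ∘ f.2⟩

/-- A database over schema `S` with constants from `C`: a set of facts. -/
abbrev DB (S : Schema) (C : Type) : Type := Set (Fct S C)

/-- A conjunctive query over schema `S` with `n` answer variables. -/
structure CQ (S : Schema) (n : ℕ) : Type 1 where
  V : Type
  ansVar : Fin n → V
  atoms : DB S V

/-- `t` is an answer to the CQ `q` on the database `D`. -/
def cqAns {S : Schema} {n : ℕ} (q : CQ S n) {C : Type} (D : DB S C) (t : Fin n → C) : Prop :=
  ∃ h : q.V → C, (∀ a ∈ q.atoms, mapFct h a ∈ D) ∧ h ∘ q.ansVar = t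

/-- A (possibly infinitary) union of conjunctive queries. -/
abbrev UCQ (S : Schema) (n : ℕ) : Type 1 := Set (CQ S n)

/-- `t` is an answer to the UCQ `q` on the database `D`. -/
def ucqAns {S : Schema} {n : ℕ} (q : UCQ S n) {C : Type} (D : DB S C) (t : Fin n → C) : Prop :=
  ∃ p ∈ q, cqAns p D t

/-- Containment of UCQs over all databases of the schema. -/
def Contained {S : Schema} {n : ℕ} (q1 q2 : UCQ S n) : Prop :=
  ∀ (C : Type) (D : DB S C) (t : Fin n → C), ucqAns q1 D t → ucqAns q2 D t

/-- A homomorphism from the CQ `q` to the CQ `p` (preserving atoms and answer variables). -/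
def CQHom {S : Schema} {n : ℕ} (q p : CQ S n) : Prop :=
  ∃ h : q.V → p.V, (∀ a ∈ q.atoms, mapFct h a ∈ p.atoms) ∧ h ∘ q.ansVar = p.ansVar

/-- An ontology over schema `T`, taken semantically: the class of its models, i.e.
a class of (possibly infinite) `T`-databases over arbitrary domains. -/
def Ontology (T : Schema) : Type 1 := (C : Type) → DB T C → Prop

/-- `t` is a certain answer to the OMQ `(O, T, q)` on the ABox `A`: in every model of
`A` and `O` (an interpretation into which `A` maps homomorphically via the
interpretation `ι` of its constants), `ι ∘ t` is an answer to `q`. -/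
def certAns {T : Schema} {n : ℕ} (O : Ontology T) (q : UCQ T n) {C : Type}
    (A : DB T C) (t : Fin n → C) : Prop :=
  ∀ (E : Type) (I : DB T E) (ι : C → E),
    (∀ f ∈ A, mapFct ι f ∈ I) → O E I → ucqAns q I (ι ∘ t)

/-- `qr` is a (possibly infinitary) UCQ rewriting of the OMQ `(O, T, q)`: on every
ABox, the answers to `qr` coincide with the certain answers of the OMQ. -/
def IsRewriting {T : Schema} {n : ℕ} (O : Ontology T) (q qr : UCQ T n) : Prop :=
  ∀ (C : Type) (A : DB T C) (t : Fin n → C), ucqAns qr A t ↔ certAns O q A t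

theorem omq_of_rewriting_contained_in_rewriting (T : Schema) (k : ℕ) (O : Ontology T)
    (q : UCQ T k) (qr : UCQ T k) (hqr : IsRewriting O q qr) :
    ∀ (C : Type) (A : DB T C) (t : Fin k → C), certAns O qr A t → ucqAns qr A t := by
  intro C A t hc
  rw [hqr]
  intro E I ι hA hO
  have h1 : ucqAns qr I (ι ∘ t) := hc E I ι hA hO
  have h2 := (hqr E I (ι ∘ t)).mp h1
  have := h2 E I id (fun f hf => by exact hf) hO
  simpa using this
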